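/- Let f̄₁, f̄₂: X → ℝ be η-strongly concave functions on a nonempty compact convex set X ⊆ ℝ^n with maximizers φ̄₁, φ̄₂ respectively. If sup_{φ ∈ X} |f̄₁(φ) − f̄₂(φ)| ≤ ε, then ‖φ̄₁ − φ̄₂‖² ≤ 2ε/η. -/
import Mathlib

open scoped RealInnerProductSpace

lemma quad_growth {n : ℕ} {X : Set (EuclideanSpace ℝ (Fin n))} (hcv : Convex ℝ X)
    {f : EuclideanSpace ℝ (Fin n) → ℝ} {η : ℝ} (hη : 0 < η)
    (hsc : ∀ x ∈ X, ∃ g, ∀ y ∈ X, f y ≤ f x + ⟪g, y - x⟫ - η / 2 * ‖y - x‖ ^ 2)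
    {φ : EuclideanSpace ℝ (Fin n)} (hφ : φ ∈ X) (hmax : ∀ y ∈ X, f y ≤ f φ)
    {y : EuclideanSpace ℝ (Fin n)} (hy : y ∈ X) :
    f y + η / 2 * ‖y - φ‖ ^ 2 ≤ f φ := by
  have key : ∀ t ∈ Set.Ioo (0:ℝ) 1, f y + η / 2 * (1 - t) * ‖y - φ‖ ^ 2 ≤ f φ := by
    rintro t ⟨ht0, ht1⟩
    set x := (1 - t) • φ + t • y with hx
    have hxX : x ∈ X := hcv hφ hy (by linarith) (le_of_lt ht0) (by ring)
    obtain ⟨g, hg⟩ := hsc x hxX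
    have h1 := hg y hy
    have h2 := hg φ hφ
    have e1 : y - x = (1 - t) • (y - φ) := by
      simp only [hx]; module
    have e2 : φ - x = (-t) • (y - φ) := by
      simp only [hx]; module
    rw [e1, real_inner_smul_right, norm_smul, mul_pow] at h1
    rw [e2, real_inner_smul_right, norm_smul, mul_pow] at h2
    have hn1 : ‖(1 - t)‖ ^ 2 = (1 - t)^2 := by
      rw [Real.norm_eq_abs, sq_abs]
    have hn2 : ‖(-t)‖ ^ 2 = t^2 := by
      rw [Real.norm_eq_abs, sq_abs]; ring
    rw [hn1] at h1; rw [hn2] at h2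
    have hmx := hmax x hxX
    nlinarith [sq_nonneg (‖y - φ‖), mul_pos ht0 (sub_pos.mpr ht1)]
  have htend : Filter.Tendsto (fun t : ℝ => f y + η / 2 * (1 - t) * ‖y - φ‖ ^ 2)
      (nhdsWithin 0 (Set.Ioo (0:ℝ) 1)) (nhds (f y + η / 2 * (1 - 0) * ‖y - φ‖ ^ 2)) := by
    apply Filter.Tendsto.mono_left _ nhdsWithin_le_nhds
    exact (Continuous.tendsto (by continuity) 0)
  have hne : (nhdsWithin (0:ℝ) (Set.Ioo 0 1)).NeBot := by
    apply mem_closure_iff_nhdsWithin_neBot.mp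
    rw [closure_Ioo one_ne_zero.symm]
    exact ⟨le_refl 0, zero_le_one⟩
  have := le_of_tendsto htend (eventually_nhdsWithin_of_forall key)
  simpa using this

/-- Stability of maximizers of strongly concave functions: if `f₁, f₂` are
`η`-strongly concave on a nonempty compact convex `X` (supergradient form with
`η/2`), with maximizers `φ̄₁, φ̄₂`, and `|f₁ - f₂| ≤ ε` uniformly on `X`, then
`‖φ̄₁ - φ̄₂‖² ≤ 2ε/η`. -/
theorem stmt_16 {n : ℕ} (X : Set (EuclideanSpace ℝ (Fin n)))
    (hne : X.Nonempty) (hcpt : IsCompact X) (hcv : Convex ℝ X)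
    (f₁ f₂ : EuclideanSpace ℝ (Fin n) → ℝ) (η ε : ℝ) (hη : 0 < η) (hε : 0 ≤ ε)
    (hsc₁ : ∀ x ∈ X, ∃ g, ∀ y ∈ X, f₁ y ≤ f₁ x + ⟪g, y - x⟫ - η / 2 * ‖y - x‖ ^ 2)
    (hsc₂ : ∀ x ∈ X, ∃ g, ∀ y ∈ X, f₂ y ≤ f₂ x + ⟪g, y - x⟫ - η / 2 * ‖y - x‖ ^ 2)
    (φ₁ φ₂ : EuclideanSpace ℝ (Fin n)) (hφ₁ : φ₁ ∈ X) (hφ₂ : φ₂ ∈ X)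
    (hmax₁ : ∀ y ∈ X, f₁ y ≤ f₁ φ₁) (hmax₂ : ∀ y ∈ X, f₂ y ≤ f₂ φ₂)
    (hclose : ∀ φ ∈ X, |f₁ φ - f₂ φ| ≤ ε) :
    ‖φ₁ - φ₂‖ ^ 2 ≤ 2 * ε / η := by
  have h1 := quad_growth hcv hη hsc₁ hφ₁ hmax₁ hφ₂
  have h2 := quad_growth hcv hη hsc₂ hφ₂ hmax₂ hφ₁
  have hc1 := abs_le.mp (hclose φ₁ hφ₁)
  have hc2 := abs_le.mp (hclose φ₂ hφ₂)
  have hnorm : ‖φ₂ - φ₁‖ = ‖φ₁ - φ₂‖ := norm_sub_rev _ _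
  rw [hnorm] at h1
  rw [le_div_iff₀ hη]
  nlinarith [h1, h2, hc1.1, hc1.2, hc2.1, hc2.2]
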